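/- Let σ be a distortion and Z an integrable real random variable with E[Z] = 1 and (1−α)·CTE_α(Z) ≤ ∫_α¹ σ(p) dp for all α ∈ [0,1). Then Z ≥ 0 almost surely. -/

import Mathlib

open MeasureTheory Set
open scoped ENNReal

/-- The cumulative distribution function `F_Z(x) = P(Z ≤ x)` of a random variable `Z`. -/
noncomputable def cdfRV {Ω : Type*} [MeasurableSpace Ω] (P : Measure Ω) (Z : Ω → ℝ) (x : ℝ) : ℝ :=
  (P {ω | Z ω ≤ x}).toReal

/-- The generalized inverse (quantile function) `F_Z⁻¹(u) = inf {x : F_Z(x) ≥ u}`. -/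
noncomputable def quantileRV {Ω : Type*} [MeasurableSpace Ω] (P : Measure Ω) (Z : Ω → ℝ)
    (u : ℝ) : ℝ :=
  sInf {x : ℝ | u ≤ cdfRV P Z x}

/-- The conditional tail expectation `CTE_α(Z) = (1−α)⁻¹ ∫_α¹ F_Z⁻¹(p) dp`. -/
noncomputable def CTE {Ω : Type*} [MeasurableSpace Ω] (P : Measure Ω) (Z : Ω → ℝ)
    (α : ℝ) : ℝ :=
  (1 - α)⁻¹ * ∫ p in α..1, quantileRV P Z p

section Aux

open ProbabilityTheory Filter Topology

/-- Quantile function of a real measure. -/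
noncomputable def qf (μ : Measure ℝ) (u : ℝ) : ℝ := sInf {x | u ≤ ProbabilityTheory.cdf μ x}

variable (μ : Measure ℝ) [IsProbabilityMeasure μ]

lemma qf_set_nonempty {u : ℝ} (hu : u < 1) : {x | u ≤ cdf μ x}.Nonempty := by
  obtain ⟨x, hx⟩ := ((tendsto_cdf_atTop μ).eventually (eventually_gt_nhds hu)).exists
  exact ⟨x, hx.le⟩

lemma qf_set_bddBelow {u : ℝ} (hu : 0 < u) : BddBelow {x | u ≤ cdf μ x} := by
  obtain ⟨x₀, hx₀⟩ := ((tendsto_cdf_atBot μ).eventually (eventually_lt_nhds hu)).exists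
  refine ⟨x₀, fun y hy => ?_⟩
  by_contra h
  push_neg at h
  exact absurd (hy.trans (monotone_cdf μ h.le)) (not_le.2 hx₀)

lemma le_cdf_qf {u : ℝ} (h0 : 0 < u) (h1 : u < 1) : u ≤ cdf μ (qf μ u) := by
  have hne := qf_set_nonempty μ h1
  have hbdd := qf_set_bddBelow μ h0
  have hcl : qf μ u ∈ closure {x | u ≤ cdf μ x} := csInf_mem_closure hne hbdd
  have hten : Tendsto (cdf μ) (𝓝[{x | u ≤ cdf μ x}] (qf μ u)) (𝓝 (cdf μ (qf μ u))) :=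
    ((cdf μ).right_continuous _).mono_left
      (nhdsWithin_mono _ fun y hy => csInf_le hbdd hy)
  haveI : (𝓝[{x | u ≤ cdf μ x}] (qf μ u)).NeBot := mem_closure_iff_nhdsWithin_neBot.1 hcl
  exact ge_of_tendsto hten (eventually_nhdsWithin_of_forall fun y hy => hy)

lemma qf_le_iff {u x : ℝ} (h0 : 0 < u) (h1 : u < 1) : qf μ u ≤ x ↔ u ≤ cdf μ x := by
  constructor
  · intro h; exact (le_cdf_qf μ h0 h1).trans (monotone_cdf μ h)
  · intro h; exact csInf_le (qf_set_bddBelow μ h0) h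

lemma qf_monoOn : MonotoneOn (qf μ) (Ioo 0 1) := fun u hu v hv huv =>
  csInf_le_csInf (qf_set_bddBelow μ hu.1) (qf_set_nonempty μ hv.2)
    (fun x hx => huv.trans hx)

lemma qf_aemeasurable : AEMeasurable (qf μ) (volume.restrict (Ioo 0 1)) :=
  aemeasurable_restrict_of_monotoneOn measurableSet_Ioo (qf_monoOn μ)

lemma qf_map : Measure.map (qf μ) (volume.restrict (Ioo 0 1)) = μ := by
  haveI : IsProbabilityMeasure (volume.restrict (Ioo (0:ℝ) 1)) :=
    ⟨by simp [Real.volume_Ioo]⟩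
  haveI : IsProbabilityMeasure (Measure.map (qf μ) (volume.restrict (Ioo (0:ℝ) 1))) :=
    Measure.isProbabilityMeasure_map (qf_aemeasurable μ)
  refine Measure.ext_of_Iic _ _ fun x => ?_
  rw [Measure.map_apply_of_aemeasurable (qf_aemeasurable μ) measurableSet_Iic,
    Measure.restrict_apply' measurableSet_Ioo]
  have hset : qf μ ⁻¹' Iic x ∩ Ioo 0 1 = Iic (cdf μ x) ∩ Ioo 0 1 := by
    ext u
    simp only [mem_inter_iff, mem_preimage, mem_Iic, mem_Ioo, and_congr_left_iff]
    intro hu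
    exact qf_le_iff μ hu.1 hu.2
  rw [hset, ← ofReal_cdf μ x]
  rcases lt_or_eq_of_le (cdf_le_one μ x) with hc | hc
  · have h2 : Iic (cdf μ x) ∩ Ioo 0 1 = Ioc 0 (cdf μ x) := by
      ext u
      simp only [mem_inter_iff, mem_Iic, mem_Ioo, mem_Ioc]
      exact ⟨fun h => ⟨h.2.1, h.1⟩, fun h => ⟨h.2, h.1, h.2.trans_lt hc⟩⟩
    rw [h2, Real.volume_Ioc, sub_zero]
  · have h2 : Iic (cdf μ x) ∩ Ioo 0 1 = Ioo 0 1 := by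
      rw [inter_eq_right]
      exact fun u hu => le_of_lt (hc ▸ hu.2)
    rw [h2, Real.volume_Ioo, sub_zero, ← hc]

end Aux

section Main
open ProbabilityTheory Filter Topology

/-- if `σ` is a distortion and `Z` is integrable with `E[Z] = 1` and
`(1−α)·CTE_α(Z) ≤ ∫_α¹ σ(p) dp` for all `α ∈ [0,1)`, then `Z ≥ 0` almost surely. -/
theorem statement_9 {Ω : Type*} [MeasurableSpace Ω] (P : Measure Ω) [IsProbabilityMeasure P]
    (σ : ℝ → ℝ)
    (hσ_nonneg : ∀ u ∈ Icc (0:ℝ) 1, 0 ≤ σ u)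
    (hσ_mono : MonotoneOn σ (Icc (0:ℝ) 1))
    (hσ_int : ∫ u in (0:ℝ)..1, σ u = 1)
    (Z : Ω → ℝ) (hZint : Integrable Z P)
    (hZmean : (∫ ω, Z ω ∂P) = 1)
    (hZdom : ∀ α ∈ Ico (0:ℝ) 1, (1 - α) * CTE P Z α ≤ ∫ p in α..1, σ p) :
    ∀ᵐ ω ∂P, 0 ≤ Z ω := by
  have hZm : AEMeasurable Z P := hZint.aestronglyMeasurable.aemeasurable
  set μ := P.map Z with hμ
  haveI : IsProbabilityMeasure μ := Measure.isProbabilityMeasure_map hZm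
  have hcdf : cdfRV P Z = fun x => ProbabilityTheory.cdf μ x := by
    funext x
    rw [cdfRV, ProbabilityTheory.cdf_eq_real, measureReal_def, hμ,
      Measure.map_apply_of_aemeasurable hZm measurableSet_Iic]
    rfl
  have hquant : quantileRV P Z = qf μ := by
    funext u
    simp only [qf]
    simp only [quantileRV, hcdf]
  -- integrability and mean transfer
  have hidint : Integrable (id : ℝ → ℝ) μ := by
    rw [hμ, integrable_map_measure aestronglyMeasurable_id hZm]
    exact hZint
  have hmean : ∫ x, id x ∂μ = 1 := by
    rw [hμ, integral_map hZm aestronglyMeasurable_id]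
    exact hZmean
  have hmap := qf_map μ
  have hGint : IntegrableOn (qf μ) (Ioo 0 1) volume := by
    have h1 : Integrable (id : ℝ → ℝ) (Measure.map (qf μ) (volume.restrict (Ioo 0 1))) := by
      rw [hmap]; exact hidint
    exact (integrable_map_measure aestronglyMeasurable_id (qf_aemeasurable μ)).mp h1
  have hGtot : ∫ u in Ioo (0:ℝ) 1, qf μ u = 1 := by
    have h := integral_map (qf_aemeasurable μ)
      (aestronglyMeasurable_id (μ := Measure.map (qf μ) (volume.restrict (Ioo 0 1))))
      (f := (id : ℝ → ℝ))
    rw [hmap] at h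
    exact h.symm.trans hmean
  -- σ interval-integrability
  have hσii : ∀ a b, a ∈ Icc (0:ℝ) 1 → b ∈ Icc (0:ℝ) 1 → IntervalIntegrable σ volume a b :=
    fun a b ha hb => (hσ_mono.mono (uIcc_subset_Icc ha hb)).intervalIntegrable
  -- quantile nonneg on (0,1)
  have hqnn : ∀ u ∈ Ioo (0:ℝ) 1, 0 ≤ qf μ u := by
    by_contra hcon
    push_neg at hcon
    obtain ⟨α, hα, hneg⟩ := hcon
    have hα0 := hα.1
    have hα1 := hα.2
    have hI1 : IntegrableOn (qf μ) (Ioc 0 α) volume :=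
      hGint.mono_set (fun x hx => ⟨hx.1, lt_of_le_of_lt hx.2 hα1⟩)
    have hI2 : IntegrableOn (qf μ) (Ioo α 1) volume :=
      hGint.mono_set (fun x hx => ⟨hα0.trans hx.1, hx.2⟩)
    have hdisj : Disjoint (Ioc (0:ℝ) α) (Ioo α 1) :=
      Set.disjoint_left.2 fun x hx hx' => absurd hx.2 (not_le.2 hx'.1)
    have hsplit : ∫ u in Ioo (0:ℝ) 1, qf μ u
        = (∫ u in Ioc (0:ℝ) α, qf μ u) + ∫ u in Ioo α 1, qf μ u := by
      rw [← setIntegral_union hdisj measurableSet_Ioo hI1 hI2,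
        Ioc_union_Ioo_eq_Ioo hα0.le hα1]
    have hb1 : ∫ u in Ioc (0:ℝ) α, qf μ u ≤ α * qf μ α := by
      have hconst : IntegrableOn (fun _ : ℝ => qf μ α) (Ioc 0 α) volume := by
        apply integrableOn_const
        · rw [Real.volume_Ioc]
          exact ENNReal.ofReal_ne_top
        · exact enorm_ne_top
      have hmono : ∫ u in Ioc (0:ℝ) α, qf μ u ≤ ∫ _ in Ioc (0:ℝ) α, qf μ α :=
        setIntegral_mono_on hI1 hconst measurableSet_Ioc
          (fun u hu => qf_monoOn μ ⟨hu.1, hu.2.trans_lt hα1⟩ hα hu.2)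
      calc ∫ u in Ioc (0:ℝ) α, qf μ u ≤ ∫ _ in Ioc (0:ℝ) α, qf μ α := hmono
        _ = α * qf μ α := by
            rw [setIntegral_const, Real.volume_real_Ioc_of_le hα0.le, sub_zero, smul_eq_mul]
    have hb2 : ∫ u in Ioo α 1, qf μ u ≤ 1 := by
      have hd := hZdom α ⟨hα0.le, hα1⟩
      rw [CTE, ← mul_assoc, mul_inv_cancel₀ (by linarith : (1:ℝ) - α ≠ 0), one_mul] at hd
      have h1 : ∫ p in α..1, quantileRV P Z p = ∫ u in Ioo α 1, qf μ u := by
        rw [hquant, intervalIntegral.integral_of_le hα1.le, integral_Ioc_eq_integral_Ioo]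
      have h2 : ∫ p in α..1, σ p ≤ 1 := by
        have hadd := intervalIntegral.integral_add_adjacent_intervals
          (hσii 0 α ⟨le_refl 0, zero_le_one⟩ ⟨hα0.le, hα1.le⟩)
          (hσii α 1 ⟨hα0.le, hα1.le⟩ ⟨zero_le_one, le_refl 1⟩)
        have hpos : 0 ≤ ∫ p in (0:ℝ)..α, σ p :=
          intervalIntegral.integral_nonneg hα0.le
            (fun u hu => hσ_nonneg u ⟨hu.1, hu.2.trans hα1.le⟩)
        rw [hσ_int] at hadd
        linarith
      rw [h1] at hd
      linarith
    have hfin : α * qf μ α < 0 := mul_neg_of_pos_of_neg hα0 hneg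
    rw [hsplit] at hGtot
    linarith
  -- conclude
  have hcdf0 : ∀ x : ℝ, x < 0 → P {ω | Z ω ≤ x} = 0 := by
    intro x hx
    have h0 : ProbabilityTheory.cdf μ x ≤ 0 := by
      by_contra h
      push_neg at h
      set u := min (ProbabilityTheory.cdf μ x) (1/2) with hu
      have hu0 : 0 < u := lt_min h (by norm_num)
      have hu1 : u < 1 := lt_of_le_of_lt (min_le_right _ _) (by norm_num)
      have hle : qf μ u ≤ x := by
        simp only [qf]
        exact csInf_le (qf_set_bddBelow μ hu0) (show u ≤ ProbabilityTheory.cdf μ x from min_le_left _ _)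
      have := hqnn u ⟨hu0, hu1⟩
      linarith
    have hμx : μ (Iic x) = 0 := by
      rw [← ProbabilityTheory.ofReal_cdf μ x, ENNReal.ofReal_eq_zero]
      exact h0
    rw [hμ, Measure.map_apply_of_aemeasurable hZm measurableSet_Iic] at hμx
    exact hμx
  rw [ae_iff]
  have hsub : {ω | ¬ 0 ≤ Z ω} ⊆ ⋃ n : ℕ, {ω | Z ω ≤ -(1/(n+1))} := by
    intro ω hω
    simp only [mem_setOf_eq, not_le] at hω
    obtain ⟨n, hn⟩ := exists_nat_one_div_lt (neg_pos.2 hω)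
    refine mem_iUnion.2 ⟨n, ?_⟩
    simp only [mem_setOf_eq]
    linarith
  refine measure_mono_null hsub (measure_iUnion_null fun n => hcdf0 _ ?_)
  have : (0:ℝ) < 1/(n+1) := by positivity
  linarith

end Main
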